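/- Let μ be a finite measure on a set E and f ∈ L^∞(E,μ) a positive function. Then min{(∫_E f dμ)², (∫_E 1 dμ)²} ≤ 3 (∫_E 1 dμ) · (∫_E ((1 + f²)^{1/2} − 1) dμ). -/

import Mathlib

open MeasureTheory

/-- Lemma 3.4: for a finite measure `μ` and a positive essentially bounded function `f`,
`min{(∫ f)², (∫ 1)²} ≤ 3 (∫ 1) ∫ (√(1 + f²) − 1)`. -/
theorem stmt8 {E : Type*} [MeasurableSpace E] (μ : Measure E) [IsFiniteMeasure μ]
    (f : E → ℝ) (hf : Measurable f) (hfpos : ∀ x, 0 < f x) (hbd : MemLp f ⊤ μ) :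
    min ((∫ x, f x ∂μ) ^ 2) ((∫ x, (1 : ℝ) ∂μ) ^ 2)
      ≤ 3 * (∫ x, (1 : ℝ) ∂μ) * ∫ x, (Real.sqrt (1 + f x ^ 2) - 1) ∂μ := by
  set g : E → ℝ := fun x => Real.sqrt (1 + f x ^ 2) - 1 with hg_def
  have hg0 : ∀ x, 0 ≤ g x := by
    intro x
    have : (1 : ℝ) ≤ Real.sqrt (1 + f x ^ 2) := by
      nlinarith [Real.sq_sqrt (show (0:ℝ) ≤ 1 + f x ^ 2 by positivity),
        Real.sqrt_nonneg (1 + f x ^ 2), sq_nonneg (f x)]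
    simp only [hg_def]; linarith
  have hgle : ∀ x, g x ≤ f x := by
    intro x
    have h1 : Real.sqrt (1 + f x ^ 2) ≤ 1 + f x := by
      rw [show (1 : ℝ) + f x = Real.sqrt ((1 + f x) ^ 2) from
        (Real.sqrt_sq (by linarith [(hfpos x).le])).symm]
      exact Real.sqrt_le_sqrt (by nlinarith [(hfpos x).le])
    simp only [hg_def]; linarith
  have hgmeas : Measurable g :=
    ((measurable_const.add (hf.pow_const 2)).sqrt).sub measurable_const
  have hfint : Integrable f μ := hbd.integrable le_top
  have hgint : Integrable g μ := by
    refine hfint.mono hgmeas.aestronglyMeasurable ?_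
    filter_upwards with x
    rw [Real.norm_of_nonneg (hg0 x), Real.norm_of_nonneg (hfpos x).le]
    exact hgle x
  set I : ℝ := ∫ x, g x ∂μ with hI_def
  set M : ℝ := ∫ x, (1 : ℝ) ∂μ with hM_def
  have hI0 : 0 ≤ I := integral_nonneg hg0
  have hM0 : 0 ≤ M := integral_nonneg fun _ => zero_le_one
  -- key pointwise identity: f x = √(g x) * √(g x + 2)
  have hfeq : ∀ x, f x = Real.sqrt (g x) * Real.sqrt (g x + 2) := by
    intro x
    rw [← Real.sqrt_mul (hg0 x)]
    have hs : Real.sqrt (1 + f x ^ 2) ^ 2 = 1 + f x ^ 2 :=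
      Real.sq_sqrt (by nlinarith [sq_nonneg (f x)])
    have hprod : g x * (g x + 2) = f x ^ 2 := by
      simp only [hg_def]; nlinarith [hs]
    rw [hprod, Real.sqrt_sq (hfpos x).le]
  have hg2int : Integrable (fun x => g x + 2) μ := hgint.add (integrable_const 2)
  have hmem1 : MemLp (fun x => Real.sqrt (g x)) 2 μ :=
    (memLp_two_iff_integrable_sq (hgmeas.sqrt).aestronglyMeasurable).2
      (hgint.congr (Filter.Eventually.of_forall fun x => (Real.sq_sqrt (hg0 x)).symm))
  have hmem2 : MemLp (fun x => Real.sqrt (g x + 2)) 2 μ :=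
    (memLp_two_iff_integrable_sq ((hgmeas.add measurable_const).sqrt).aestronglyMeasurable).2
      (hg2int.congr (Filter.Eventually.of_forall fun x =>
        (Real.sq_sqrt (show (0:ℝ) ≤ g x + 2 by linarith [hg0 x])).symm))
  have hpq : Real.HolderConjugate 2 2 := Real.HolderConjugate.two_two
  have hCS := integral_mul_le_Lp_mul_Lq_of_nonneg hpq
    (Filter.Eventually.of_forall fun x => Real.sqrt_nonneg (g x))
    (Filter.Eventually.of_forall fun x => Real.sqrt_nonneg (g x + 2))
    (by simpa using hmem1) (by simpa using hmem2)
  have h2 : ∫ x, (2 : ℝ) ∂μ = 2 * M := by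
    simp [hM_def, integral_const]; ring
  have hIg2 : ∫ x, (g x + 2) ∂μ = I + 2 * M := by
    rw [integral_add hgint (integrable_const 2), h2]
  -- rewrite the Cauchy–Schwarz bound
  have hint_sq1 : ∫ a, Real.sqrt (g a) ^ (2 : ℝ) ∂μ = I := by
    rw [hI_def]
    refine integral_congr_ae (Filter.Eventually.of_forall fun x => ?_)
    show Real.sqrt (g x) ^ (2:ℝ) = g x
    rw [Real.rpow_two]; exact Real.sq_sqrt (hg0 x)
  have hint_sq2 : ∫ a, Real.sqrt (g a + 2) ^ (2 : ℝ) ∂μ = I + 2 * M := by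
    rw [← hIg2]
    refine integral_congr_ae (Filter.Eventually.of_forall fun x => ?_)
    show Real.sqrt (g x + 2) ^ (2:ℝ) = g x + 2
    rw [Real.rpow_two]; exact Real.sq_sqrt (by linarith [hg0 x])
  rw [hint_sq1, hint_sq2] at hCS
  have hfI : ∫ x, f x ∂μ = ∫ a, Real.sqrt (g a) * Real.sqrt (g a + 2) ∂μ :=
    integral_congr_ae (Filter.Eventually.of_forall fun x => hfeq x)
  have hfle : ∫ x, f x ∂μ ≤ Real.sqrt I * Real.sqrt (I + 2 * M) := by
    rw [hfI]
    calc ∫ a, Real.sqrt (g a) * Real.sqrt (g a + 2) ∂μ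
        ≤ I ^ ((1:ℝ)/2) * (I + 2 * M) ^ ((1:ℝ)/2) := hCS
      _ = Real.sqrt I * Real.sqrt (I + 2 * M) := by
          rw [Real.sqrt_eq_rpow, Real.sqrt_eq_rpow]
  have hfsq : (∫ x, f x ∂μ) ^ 2 ≤ I * (I + 2 * M) := by
    have hrhs0 : 0 ≤ Real.sqrt I * Real.sqrt (I + 2 * M) :=
      mul_nonneg (Real.sqrt_nonneg _) (Real.sqrt_nonneg _)
    have := pow_le_pow_left₀ (integral_nonneg fun x => (hfpos x).le) hfle 2
    calc (∫ x, f x ∂μ) ^ 2 ≤ (Real.sqrt I * Real.sqrt (I + 2 * M)) ^ 2 := this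
      _ = I * (I + 2 * M) := by
          rw [mul_pow, Real.sq_sqrt hI0, Real.sq_sqrt (by linarith)]
  rcases le_total I M with hIM | hMI
  · refine le_trans (min_le_left _ _) ?_
    calc (∫ x, f x ∂μ) ^ 2 ≤ I * (I + 2 * M) := hfsq
      _ ≤ 3 * M * I := by nlinarith
  · refine le_trans (min_le_right _ _) ?_
    calc M ^ 2 ≤ 3 * M * I := by nlinarith
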